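/- For every positive even integer i, there is no binary [3i−1, 2, 2i−1] LCD code, but there exists a binary [3i−1, 2, 2i−2] LCD code; hence LCD[3i−1,2] = 2i − 2 for i even. -/

import Mathlib

open Matrix

/-- The dual code of a binary linear code `C ⊆ GF(2)^n` under the standard bilinear form. -/
def dualCode {n : ℕ} (C : Submodule (ZMod 2) (Fin n → ZMod 2)) :
    Submodule (ZMod 2) (Fin n → ZMod 2) where
  carrier := {v | ∀ c ∈ C, v ⬝ᵥ c = 0}
  add_mem' := by
    intro a b ha hb c hc
    simp [add_dotProduct, ha c hc, hb c hc]
  zero_mem' := by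
    intro c hc
    simp
  smul_mem' := by
    intro r a ha c hc
    simp [smul_dotProduct, ha c hc]

/-- A linear code is LCD if it intersects its dual trivially. -/
def isLCD {n : ℕ} (C : Submodule (ZMod 2) (Fin n → ZMod 2)) : Prop :=
  C ⊓ dualCode C = ⊥

/-- `C` has minimum distance `d`: every nonzero codeword has Hamming weight at least `d`,
and some nonzero codeword has Hamming weight exactly `d`. -/
def hasMinDist {n : ℕ} (C : Submodule (ZMod 2) (Fin n → ZMod 2)) (d : ℕ) : Prop :=
  (∀ v ∈ C, v ≠ 0 → d ≤ hammingNorm v) ∧ ∃ v ∈ C, v ≠ 0 ∧ hammingNorm v = d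

/-- `LCDmax n k` is the largest minimum distance among binary `[n,k]` LCD codes. -/
noncomputable def LCDmax (n k : ℕ) : ℕ :=
  sSup {d | ∃ C : Submodule (ZMod 2) (Fin n → ZMod 2),
    Module.finrank (ZMod 2) ↥C = k ∧ hasMinDist C d ∧ isLCD C}

section Helpers

open Finset

variable {n : ℕ}

lemma zmod2_cases : ∀ x : ZMod 2, x = 0 ∨ x = 1 := by decide

def supp (v : Fin n → ZMod 2) : Finset (Fin n) := {j | v j ≠ 0}

lemma mem_supp (v : Fin n → ZMod 2) (j : Fin n) : j ∈ supp v ↔ v j ≠ 0 := by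
  simp [supp]

lemma hammingNorm_eq (v : Fin n → ZMod 2) : hammingNorm v = (supp v).card := rfl

lemma dot_eq (v w : Fin n → ZMod 2) :
    v ⬝ᵥ w = ((supp v ∩ supp w).card : ZMod 2) := by
  have h : ∀ j, v j * w j = if j ∈ supp v ∩ supp w then (1 : ZMod 2) else 0 := by
    intro j
    by_cases hm : j ∈ supp v ∩ supp w
    · rw [if_pos hm]
      rw [mem_inter, mem_supp, mem_supp] at hm
      rcases zmod2_cases (v j) with h1 | h1 <;> rcases zmod2_cases (w j) with h2 | h2 <;>
        first
          | exact absurd ⟨by rw [h1]; decide, by rw [h2]; decide⟩ (by simp_all)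
          | simp_all
    · rw [if_neg hm]
      rw [mem_inter, mem_supp, mem_supp] at hm
      rcases zmod2_cases (v j) with h1 | h1 <;> rcases zmod2_cases (w j) with h2 | h2 <;>
        first
          | exact absurd ⟨by rw [h1]; decide, by rw [h2]; decide⟩ hm
          | simp [h1, h2]
  rw [dotProduct]
  simp_rw [h]
  rw [Finset.sum_ite_mem, Finset.univ_inter, Finset.sum_const, nsmul_eq_mul, mul_one]

lemma dot_self_eq (v : Fin n → ZMod 2) : v ⬝ᵥ v = (hammingNorm v : ZMod 2) := by
  rw [dot_eq, hammingNorm_eq, inter_self]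

lemma supp_add (v w : Fin n → ZMod 2) : supp (v + w) = symmDiff (supp v) (supp w) := by
  ext j
  rw [mem_supp, Finset.mem_symmDiff, mem_supp, mem_supp, Pi.add_apply]
  rcases zmod2_cases (v j) with h1 | h1 <;> rcases zmod2_cases (w j) with h2 | h2 <;>
    simp [h1, h2] <;> decide

lemma card_facts (v w : Fin n → ZMod 2) :
    hammingNorm v + hammingNorm w
      = hammingNorm (v + w) + 2 * (supp v ∩ supp w).card ∧
    hammingNorm (v + w) + (supp v ∩ supp w).card ≤ n := by
  have hd : Disjoint (symmDiff (supp v) (supp w)) (supp v ∩ supp w) := by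
    simpa using disjoint_symmDiff_inf (supp v) (supp w)
  have he : symmDiff (supp v) (supp w) ∪ (supp v ∩ supp w) = supp v ∪ supp w := by
    simpa using symmDiff_sup_inf (a := supp v) (b := supp w)
  have hu : (supp (v+w)).card + (supp v ∩ supp w).card = (supp v ∪ supp w).card := by
    rw [supp_add, ← Finset.card_union_of_disjoint hd, he]
  have h2 : (supp v ∪ supp w).card + (supp v ∩ supp w).card
      = (supp v).card + (supp w).card := Finset.card_union_add_card_inter _ _
  have h3 : (supp v ∪ supp w).card ≤ n := by
    simpa using Finset.card_le_univ (supp v ∪ supp w)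
  rw [hammingNorm_eq, hammingNorm_eq, hammingNorm_eq]
  omega

lemma natCast_zmod2 (k : ℕ) : (k : ZMod 2) = if k % 2 = 1 then 1 else 0 := by
  rw [← ZMod.natCast_mod k 2]
  rcases Nat.mod_two_eq_zero_or_one k with h | h <;> simp [h]

lemma mem_dualCode {C : Submodule (ZMod 2) (Fin n → ZMod 2)} {v : Fin n → ZMod 2} :
    v ∈ dualCode C ↔ ∀ c ∈ C, v ⬝ᵥ c = 0 := Iff.rfl

lemma exists_pair (C : Submodule (ZMod 2) (Fin n → ZMod 2))
    (h : Module.finrank (ZMod 2) ↥C = 2) :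
    ∃ a b : Fin n → ZMod 2, a ∈ C ∧ b ∈ C ∧
      (∀ γ δ : ZMod 2, γ • a + δ • b = 0 → γ = 0 ∧ δ = 0) ∧
      (∀ c ∈ C, ∃ γ δ : ZMod 2, c = γ • a + δ • b) := by
  let B := Module.finBasisOfFinrankEq (ZMod 2) ↥C h
  refine ⟨(B 0 : Fin n → ZMod 2), (B 1 : Fin n → ZMod 2), (B 0).2, (B 1).2, ?_, ?_⟩
  · intro γ δ hγδ
    have h0 : γ • B 0 + δ • B 1 = 0 := by
      apply Subtype.ext
      simpa using hγδ
    have hli := Fintype.linearIndependent_iff.mp B.linearIndependent ![γ, δ] (by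
      simpa [Fin.sum_univ_two] using h0)
    exact ⟨by simpa using hli 0, by simpa using hli 1⟩
  · intro c hc
    refine ⟨B.repr ⟨c, hc⟩ 0, B.repr ⟨c, hc⟩ 1, ?_⟩
    have hr := B.sum_repr ⟨c, hc⟩
    have h2 := congrArg (Subtype.val) hr
    simp only [Fin.sum_univ_two, Submodule.coe_add, Submodule.coe_smul] at h2
    exact h2.symm

lemma card_filter_fin (n : ℕ) (P : ℕ → Prop) [DecidablePred P] :
    ((univ : Finset (Fin n)).filter (fun j : Fin n => P j.val)).card
      = ((range n).filter P).card := by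
  apply Finset.card_bij (fun (a : Fin n) _ => (a : ℕ))
  · intro a ha
    simp only [mem_filter, mem_univ, true_and] at ha
    simp only [mem_filter, mem_range]
    exact ⟨a.isLt, ha⟩
  · intro a _ b _ hab
    exact Fin.ext hab
  · intro j hj
    simp only [mem_filter, mem_range] at hj
    exact ⟨⟨j, hj.1⟩, by simp [hj.2], rfl⟩

end Helpers

section Main

lemma no_lcd_code (i : ℕ) (hi : 2 ≤ i) (hpar : i % 2 = 0) :
    ¬ ∃ C : Submodule (ZMod 2) (Fin (3 * i - 1) → ZMod 2),
      Module.finrank (ZMod 2) ↥C = 2 ∧ hasMinDist C (2 * i - 1) ∧ isLCD C := by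
  rintro ⟨C, hrk, ⟨hmin, -⟩, hlcd⟩
  obtain ⟨a, b, ha, hb, hind, hspan⟩ := exists_pair C hrk
  have ha0 : a ≠ 0 := by
    intro h
    exact one_ne_zero (hind 1 0 (by simp [h])).1
  have hb0 : b ≠ 0 := by
    intro h
    exact one_ne_zero (hind 0 1 (by simp [h])).2
  have hab0 : a + b ≠ 0 := by
    intro h
    exact one_ne_zero (hind 1 1 (by simpa using h)).1
  have hab : a + b ∈ C := C.add_mem ha hb
  have hwa := hmin a ha ha0
  have hwb := hmin b hb hb0
  have hwab := hmin _ hab hab0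
  obtain ⟨hcard, hle⟩ := card_facts a b
  have dba : b ⬝ᵥ a = (((supp a ∩ supp b).card : ℕ) : ZMod 2) := by
    rw [dot_eq, Finset.inter_comm]
  have dab : a ⬝ᵥ b = (((supp a ∩ supp b).card : ℕ) : ZMod 2) := dot_eq a b
  have key : ∃ z, z ∈ C ∧ z ≠ 0 ∧ z ⬝ᵥ a = 0 ∧ z ⬝ᵥ b = 0 := by
    rcases (by omega :
        (hammingNorm a % 2 = 1 ∧ hammingNorm b % 2 = 1
          ∧ (supp a ∩ supp b).card % 2 = 1)
        ∨ (hammingNorm b % 2 = 0 ∧ (supp a ∩ supp b).card % 2 = 0)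
        ∨ (hammingNorm a % 2 = 0 ∧ (supp a ∩ supp b).card % 2 = 0)) with
      ⟨h1, h2, h3⟩ | ⟨h1, h2⟩ | ⟨h1, h2⟩
    · refine ⟨a + b, hab, hab0, ?_, ?_⟩
      · rw [add_dotProduct, dot_self_eq, dba, natCast_zmod2, natCast_zmod2,
          if_pos h1, if_pos h3]
        decide
      · rw [add_dotProduct, dab, dot_self_eq, natCast_zmod2, natCast_zmod2,
          if_pos h3, if_pos h2]
        decide
    · refine ⟨b, hb, hb0, ?_, ?_⟩
      · rw [dba, natCast_zmod2, if_neg (by omega)]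
      · rw [dot_self_eq, natCast_zmod2, if_neg (by omega)]
    · refine ⟨a, ha, ha0, ?_, ?_⟩
      · rw [dot_self_eq, natCast_zmod2, if_neg (by omega)]
      · rw [dab, natCast_zmod2, if_neg (by omega)]
  obtain ⟨z, hzC, hz0, hza, hzb⟩ := key
  have hzdual : z ∈ dualCode C := by
    rw [mem_dualCode]
    intro c hc
    obtain ⟨γ, δ, rfl⟩ := hspan c hc
    rw [dotProduct_add, dotProduct_smul, dotProduct_smul, hza, hzb]
    simp
  have hmem : z ∈ C ⊓ dualCode C := ⟨hzC, hzdual⟩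
  have hlcd' : C ⊓ dualCode C = ⊥ := hlcd
  rw [hlcd', Submodule.mem_bot] at hmem
  exact hz0 hmem

lemma dist_le (i : ℕ) (hi : 1 ≤ i) (d : ℕ)
    (h : ∃ C : Submodule (ZMod 2) (Fin (3 * i - 1) → ZMod 2),
      Module.finrank (ZMod 2) ↥C = 2 ∧ hasMinDist C d ∧ isLCD C) : d ≤ 2 * i - 1 := by
  obtain ⟨C, hrk, ⟨hmin, -⟩, -⟩ := h
  obtain ⟨a, b, ha, hb, hind, -⟩ := exists_pair C hrk
  have ha0 : a ≠ 0 := by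
    intro h
    exact one_ne_zero (hind 1 0 (by simp [h])).1
  have hb0 : b ≠ 0 := by
    intro h
    exact one_ne_zero (hind 0 1 (by simp [h])).2
  have hab0 : a + b ≠ 0 := by
    intro h
    exact one_ne_zero (hind 1 1 (by simpa using h)).1
  have hwa := hmin a ha ha0
  have hwb := hmin b hb hb0
  have hwab := hmin _ (C.add_mem ha hb) hab0
  obtain ⟨hcard, hle⟩ := card_facts a b
  omega

end Main

section Construction

open Finset

lemma exists_code (i : ℕ) (hi : 2 ≤ i) (hpar : i % 2 = 0) :
    ∃ C : Submodule (ZMod 2) (Fin (3 * i - 1) → ZMod 2),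
      Module.finrank (ZMod 2) ↥C = 2 ∧ hasMinDist C (2 * i - 2) ∧ isLCD C := by
  set n := 3 * i - 1 with hn
  set a : Fin n → ZMod 2 := fun j => if (j : ℕ) < 2 * i - 2 then 1 else 0 with hadef
  set b : Fin n → ZMod 2 := fun j => if i - 1 ≤ (j : ℕ) then 1 else 0 with hbdef
  have hsa : supp a = (univ : Finset (Fin n)).filter (fun j : Fin n => j.val < 2 * i - 2) := by
    ext j
    rw [mem_supp]
    by_cases hc : (j : ℕ) < 2 * i - 2 <;> simp [hadef, hc]
  have hsb : supp b = (univ : Finset (Fin n)).filter (fun j : Fin n => i - 1 ≤ j.val) := by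
    ext j
    rw [mem_supp]
    by_cases hc : i - 1 ≤ (j : ℕ) <;> simp [hbdef, hc]
  have hwa : hammingNorm a = 2 * i - 2 := by
    rw [hammingNorm_eq, hsa, card_filter_fin n (fun m => m < 2 * i - 2)]
    have he : (range n).filter (fun j => j < 2 * i - 2) = range (2 * i - 2) := by
      ext j
      simp only [mem_filter, mem_range]
      omega
    rw [he, card_range]
  have hwb : hammingNorm b = 2 * i := by
    rw [hammingNorm_eq, hsb, card_filter_fin n (fun m => i - 1 ≤ m)]
    have he : (range n).filter (fun j => i - 1 ≤ j) = range n \ range (i - 1) := by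
      ext j
      simp only [mem_filter, mem_range, mem_sdiff]
      omega
    rw [he, card_sdiff_of_subset (range_subset_range.2 (by omega)), card_range, card_range]
    omega
  have hpab : (supp a ∩ supp b).card = i - 1 := by
    rw [hsa, hsb, ← Finset.filter_and, card_filter_fin n (fun m => m < 2 * i - 2 ∧ i - 1 ≤ m)]
    have he : (range n).filter (fun j => j < 2 * i - 2 ∧ i - 1 ≤ j) = Ico (i - 1) (2 * i - 2) := by
      ext j
      simp only [mem_filter, mem_range, mem_Ico]
      omega
    rw [he, Nat.card_Ico]
    omega
  have hwab : hammingNorm (a + b) = 2 * i := by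
    obtain ⟨h1, -⟩ := card_facts a b
    omega
  have daa : a ⬝ᵥ a = 0 := by rw [dot_self_eq, hwa, natCast_zmod2, if_neg (by omega)]
  have dab : a ⬝ᵥ b = 1 := by rw [dot_eq, hpab, natCast_zmod2, if_pos (by omega)]
  have dba : b ⬝ᵥ a = 1 := by rw [dot_eq, Finset.inter_comm, hpab, natCast_zmod2, if_pos (by omega)]
  have dbb : b ⬝ᵥ b = 0 := by rw [dot_self_eq, hwb, natCast_zmod2, if_neg (by omega)]
  have ha1 : a ⟨0, by omega⟩ = 1 := by
    rw [hadef]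
    exact if_pos (by simp; omega)
  have hb1 : b ⟨0, by omega⟩ = 0 := by
    rw [hbdef]
    exact if_neg (by simp; omega)
  have ha2 : a ⟨2 * i - 2, by omega⟩ = 0 := by
    rw [hadef]
    exact if_neg (by simp)
  have hb2 : b ⟨2 * i - 2, by omega⟩ = 1 := by
    rw [hbdef]
    exact if_pos (by simp; omega)
  have hind : ∀ γ δ : ZMod 2, γ • a + δ • b = 0 → γ = 0 ∧ δ = 0 := by
    intro γ δ h
    constructor
    · have e0 := congrFun h ⟨0, by omega⟩
      simp only [Pi.add_apply, Pi.smul_apply, smul_eq_mul, Pi.zero_apply, ha1, hb1] at e0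
      simpa using e0
    · have e1 := congrFun h ⟨2 * i - 2, by omega⟩
      simp only [Pi.add_apply, Pi.smul_apply, smul_eq_mul, Pi.zero_apply, ha2, hb2] at e1
      simpa using e1
  have ha0 : a ≠ 0 := by
    intro h
    rw [h] at hwa
    simp [hammingNorm] at hwa
    omega
  refine ⟨Submodule.span (ZMod 2) {a, b}, ?_, ?_, ?_⟩
  · have hli : LinearIndependent (ZMod 2) ![a, b] := LinearIndependent.pair_iff.2 hind
    have hr := finrank_span_eq_card hli
    have hrange : Set.range ![a, b] = {a, b} := by
      ext x
      simp [Fin.exists_fin_two, or_comm]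
    rw [hrange] at hr
    rw [hr]
    simp
  · constructor
    · intro v hv hv0
      rw [Submodule.mem_span_pair] at hv
      obtain ⟨γ, δ, rfl⟩ := hv
      rcases zmod2_cases γ with h | h <;> rcases zmod2_cases δ with h' | h' <;>
        subst h <;> subst h' <;>
        simp only [one_smul, zero_smul, zero_add, add_zero] at hv0 ⊢
      · exact absurd rfl hv0
      · rw [hwb]; omega
      · rw [hwa]
      · rw [hwab]; omega
    · exact ⟨a, Submodule.subset_span (by simp), ha0, hwa⟩
  · show Submodule.span (ZMod 2) {a, b} ⊓ dualCode (Submodule.span (ZMod 2) {a, b}) = ⊥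
    rw [eq_bot_iff]
    rintro v ⟨hvC, hvD⟩
    replace hvD : ∀ c ∈ Submodule.span (ZMod 2) {a, b}, v ⬝ᵥ c = 0 := hvD
    have h1 := hvD a (Submodule.subset_span (by simp))
    have h2 := hvD b (Submodule.subset_span (by simp))
    replace hvC : v ∈ Submodule.span (ZMod 2) {a, b} := hvC
    rw [Submodule.mem_span_pair] at hvC
    obtain ⟨γ, δ, rfl⟩ := hvC
    rw [add_dotProduct, smul_dotProduct, smul_dotProduct,
      daa, dba, smul_eq_mul, smul_eq_mul, mul_zero, mul_one, zero_add] at h1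
    rw [add_dotProduct, smul_dotProduct, smul_dotProduct,
      dab, dbb, smul_eq_mul, smul_eq_mul, mul_zero, mul_one, add_zero] at h2
    rw [h1, h2]
    simp

end Construction

/-- For every positive even integer `i`, there is no binary `[3i−1, 2, 2i−1]` LCD code, but
there is a binary `[3i−1, 2, 2i−2]` LCD code; hence `LCD[3i−1, 2] = 2i − 2` for even `i`. -/
theorem lcd_3i_sub_one_even (i : ℕ) (hi : 1 ≤ i) (heven : Even i) :
    (¬ ∃ C : Submodule (ZMod 2) (Fin (3 * i - 1) → ZMod 2),
      Module.finrank (ZMod 2) ↥C = 2 ∧ hasMinDist C (2 * i - 1) ∧ isLCD C) ∧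
    (∃ C : Submodule (ZMod 2) (Fin (3 * i - 1) → ZMod 2),
      Module.finrank (ZMod 2) ↥C = 2 ∧ hasMinDist C (2 * i - 2) ∧ isLCD C) ∧
    LCDmax (3 * i - 1) 2 = 2 * i - 2 := by
  have hi2 : 2 ≤ i := by
    obtain ⟨k, hk⟩ := heven
    omega
  have hpar : i % 2 = 0 := Nat.even_iff.1 heven
  refine ⟨no_lcd_code i hi2 hpar, exists_code i hi2 hpar, ?_⟩
  rw [LCDmax]
  have hmem : (2 * i - 2) ∈ {d | ∃ C : Submodule (ZMod 2) (Fin (3 * i - 1) → ZMod 2),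
      Module.finrank (ZMod 2) ↥C = 2 ∧ hasMinDist C d ∧ isLCD C} := exists_code i hi2 hpar
  have hub : ∀ d ∈ {d | ∃ C : Submodule (ZMod 2) (Fin (3 * i - 1) → ZMod 2),
      Module.finrank (ZMod 2) ↥C = 2 ∧ hasMinDist C d ∧ isLCD C}, d ≤ 2 * i - 2 := by
    intro d hd
    have h1 : d ≤ 2 * i - 1 := dist_le i (by omega) d hd
    have h2 : d ≠ 2 * i - 1 := by
      rintro rfl
      exact no_lcd_code i hi2 hpar hd
    omega
  exact le_antisymm (csSup_le ⟨_, hmem⟩ hub) (le_csSup ⟨_, hub⟩ hmem)
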